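/- Proposition 2 (index-partition equals data-partition). Let expr_G be a symbolic multidimensional expression satisfying the assumptions of Lemmas 1 and 2 (every leaf-to-root path passes through at least one sum operator, and for every leaf the union of the global index tuples of the sum operators on its path equals G). Fix an index k ∈ {1,…,N} and a subset P ⊆ space(g_k). Then running the exhaustive instantiation algorithm (Algorithm 1) only over the restricted set of global index tuples {(g*_1,…,g*_N) ∈ space(G) : g*_k ∈ P} produces exactly the same set of instantiated constraint rows as running the context-passing instantiation algorithm (Algorithm 2) on the restricted set data in which every set S_i* whose index tuples contain the placeholder g_k is replaced by its subset of tuples whose g_k-component lies in P. -/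

import Mathlib

/-- A symbolic multidimensional expression tree.  Leaf nodes are *terms*, consisting of
a rational coefficient and a variable whose indices are determined (as functions) by the
values of the index placeholders recorded in a context `ℕ → Option V`.  Non-leaf nodes are
binary add/subtract operators and unary sum operators; a sum operator carries its logical
condition `(Gk ‖ Lk) ∈ data`, where `Gk` is the tuple of global index placeholders,
`Lk` the tuple of local index placeholders, and `data` the instantiating finite set of
index tuples. -/
inductive GExpr (V Var : Type) : Type where
  | term (coef : (ℕ → Option V) → ℚ) (var : (ℕ → Option V) → Var) : GExpr V Var
  | add (l r : GExpr V Var) : GExpr V Var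
  | sub (l r : GExpr V Var) : GExpr V Var
  | sum (Gk Lk : List ℕ) (data : Finset (List V)) (body : GExpr V Var) : GExpr V Var

variable {V Var : Type}

/-- Extend a context by binding the placeholder names `names` to the values `vals`
(componentwise). -/
def bindCtx (ctx : ℕ → Option V) (names : List ℕ) (vals : List V) : ℕ → Option V :=
  fun p => match (names.zip vals).find? (fun q => q.1 == p) with
    | some q => some q.2
    | none => ctx p

/-- `agreesB ctx names vals` holds iff the value tuple `vals` agrees with the context `ctx`
on every placeholder of `names` that is already bound in `ctx`. -/
def agreesB [DecidableEq V] (ctx : ℕ → Option V) (names : List ℕ) (vals : List V) : Bool :=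
  (names.zip vals).all (fun q => match ctx q.1 with
    | some a => decide (q.2 = a)
    | none => true)

/-- Algorithm 1 (exhaustive instantiation), evaluation of one row: given a context that binds
all global index placeholders to a concrete tuple `G*`, evaluate the expression tree to the
linear expression `expr_{G*}`, represented as the function assigning to each variable its
coefficient.  A sum operator is evaluated as the sum of its operand over all tuples of its
set data whose `Gk`-components equal the corresponding components of `G*`, with the
`Lk`-components bound as the values of the local index placeholders. -/
def evalFull [DecidableEq V] [DecidableEq Var] :
    GExpr V Var → (ℕ → Option V) → Var → ℚ
  | .term c v, ctx => fun w => if w = v ctx then c ctx else 0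
  | .add l r, ctx => fun w => evalFull l ctx w + evalFull r ctx w
  | .sub l r, ctx => fun w => evalFull l ctx w - evalFull r ctx w
  | .sum Gk Lk data body, ctx => fun w =>
      ∑ tup ∈ data.filter (fun tup => agreesB ctx Gk (tup.take Gk.length) = true),
        evalFull body (bindCtx ctx (Gk ++ Lk) tup) w

/-- Algorithm 2 (context-passing instantiation), with aggregation of tagged terms built in:
starting from a (partial) context, traverse the tree once; at a sum operator iterate over
those tuples of the set data that agree with the context on the already-bound placeholders
of `Gk`, extending the context by the bindings `Gk := Gk*`, `Lk := Lk*`; at a subtract node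
negate the right operand's terms; at a leaf emit the term tagged with the context's values
of all global placeholders `Glist`.  `evalTagged Glist e ctx tag w` is the aggregated
coefficient of variable `w` in the constraint row indexed by `tag`. -/
def evalTagged [DecidableEq V] [DecidableEq Var] (Glist : List ℕ) :
    GExpr V Var → (ℕ → Option V) → List (Option V) → Var → ℚ
  | .term c v, ctx => fun tag w => if tag = Glist.map ctx ∧ w = v ctx then c ctx else 0
  | .add l r, ctx => fun tag w => evalTagged Glist l ctx tag w + evalTagged Glist r ctx tag w
  | .sub l r, ctx => fun tag w => evalTagged Glist l ctx tag w - evalTagged Glist r ctx tag w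
  | .sum Gk Lk data body, ctx => fun tag w =>
      ∑ tup ∈ data.filter (fun tup => agreesB ctx Gk (tup.take Gk.length) = true),
        evalTagged Glist body (bindCtx ctx (Gk ++ Lk) tup) tag w

/-- `spaceTuples sp names` is `space(G)` for the tuple `names` of placeholders: the finite
set of tuples whose `j`-th component ranges over the admissible values `sp (names j)`. -/
def spaceTuples [DecidableEq V] (sp : ℕ → Finset V) : List ℕ → Finset (List V)
  | [] => {[]}
  | g :: gs => ((sp g) ×ˢ spaceTuples sp gs).image (fun p => p.1 :: p.2)

/-- The full context binding the global placeholders `Glist` to the concrete tuple `Gstar`. -/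
def fullCtx (Glist : List ℕ) (Gstar : List V) : ℕ → Option V :=
  bindCtx (fun _ => none) Glist Gstar

/-- One-hole contexts for expression trees, used to designate the position of a node. -/
inductive GCtx (V Var : Type) : Type where
  | hole : GCtx V Var
  | addL (c : GCtx V Var) (r : GExpr V Var) : GCtx V Var
  | addR (l : GExpr V Var) (c : GCtx V Var) : GCtx V Var
  | subL (c : GCtx V Var) (r : GExpr V Var) : GCtx V Var
  | subR (l : GExpr V Var) (c : GCtx V Var) : GCtx V Var
  | sumC (Gk Lk : List ℕ) (data : Finset (List V)) (c : GCtx V Var) : GCtx V Var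

/-- Plug an expression into the hole of a one-hole context. -/
def GCtx.plug : GCtx V Var → GExpr V Var → GExpr V Var
  | .hole, e => e
  | .addL c r, e => .add (c.plug e) r
  | .addR l c, e => .add l (c.plug e)
  | .subL c r, e => .sub (c.plug e) r
  | .subR l c, e => .sub l (c.plug e)
  | .sumC Gk Lk d c, e => .sum Gk Lk d (c.plug e)

/-- The path from the hole to the root contains no sum operator. -/
def GCtx.noSum : GCtx V Var → Prop
  | .hole => True
  | .addL c _ => c.noSum
  | .addR _ c => c.noSum
  | .subL c _ => c.noSum
  | .subR _ c => c.noSum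
  | .sumC _ _ _ _ => False

/-- The global index placeholder tuples `Gk` of the sum operators on the path from the
hole to the root. -/
def GCtx.spineGks : GCtx V Var → List (List ℕ)
  | .hole => []
  | .addL c _ => c.spineGks
  | .addR _ c => c.spineGks
  | .subL c _ => c.spineGks
  | .subR _ c => c.spineGks
  | .sumC Gk _ _ c => Gk :: c.spineGks

/-- Every path from a leaf node to the root passes through at least one sum operator
(the assumption justified by Lemma 1). -/
def GExpr.allUnderSum : GExpr V Var → Prop
  | .term _ _ => False
  | .add l r => l.allUnderSum ∧ r.allUnderSum
  | .sub l r => l.allUnderSum ∧ r.allUnderSum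
  | .sum _ _ _ _ => True

/-- Well-formedness of a symbolic expression w.r.t. the global placeholder tuple `Glist`:
at every sum operator, `Gk` is a tuple of placeholders from `Glist`, the local placeholders
`Lk` are disjoint from the globals, both tuples consist of distinct placeholders, and every
tuple of the set data has length `|Gk| + |Lk|`. -/
def GExpr.wf (Glist : List ℕ) : GExpr V Var → Prop
  | .term _ _ => True
  | .add l r => l.wf Glist ∧ r.wf Glist
  | .sub l r => l.wf Glist ∧ r.wf Glist
  | .sum Gk Lk data body =>
      (∀ g ∈ Gk, g ∈ Glist) ∧ (∀ l ∈ Lk, l ∉ Glist) ∧ Gk.Nodup ∧ Lk.Nodup ∧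
      (∀ tup ∈ data, tup.length = Gk.length + Lk.length) ∧ body.wf Glist

/-- For every leaf node, the union of the global placeholder tuples `Gk` of the sum
operators on its path to the root covers all of `Glist` (the assumption justified by
Lemma 2); `acc` accumulates the globals bound so far. -/
def GExpr.covers (Glist : List ℕ) : GExpr V Var → List ℕ → Prop
  | .term _ _, acc => ∀ g ∈ Glist, g ∈ acc
  | .add l r, acc => l.covers Glist acc ∧ r.covers Glist acc
  | .sub l r, acc => l.covers Glist acc ∧ r.covers Glist acc
  | .sum Gk _ _ body, acc => body.covers Glist (acc ++ Gk)

/-- Lemma 2's data expansion: replace every tuple of `data` by all its expansions inserting,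
after the first `nG` (global) components, one value from `vals`. -/
def expandData [DecidableEq V] (data : Finset (List V)) (nG : ℕ) (vals : Finset V) :
    Finset (List V) :=
  (data ×ˢ vals).image (fun p => p.1.take nG ++ p.2 :: p.1.drop nG)

/-- Proposition 2's data restriction w.r.t. the global placeholder `gk` and the admissible
subset `P`: every set data whose index tuples contain the placeholder `gk` is replaced by
its subset of tuples whose `gk`-component lies in `P`. -/
def GExpr.restrict [DecidableEq V] (gk : ℕ) (P : Finset V) : GExpr V Var → GExpr V Var
  | .term c v => .term c v
  | .add l r => .add (l.restrict gk P) (r.restrict gk P)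
  | .sub l r => .sub (l.restrict gk P) (r.restrict gk P)
  | .sum Gk Lk data body =>
      if gk ∈ Gk ++ Lk then
        .sum Gk Lk
          (data.filter (fun tup => ((tup[(Gk ++ Lk).idxOf gk]?).any fun a => decide (a ∈ P)) = true))
          (body.restrict gk P)
      else .sum Gk Lk data (body.restrict gk P)

section Helpers
variable {V Var : Type}

lemma find?_zip_eq (names : List ℕ) (vals : List V) (hnd : names.Nodup) :
    ∀ j (hj : j < names.length) (hv : j < vals.length),
      (names.zip vals).find? (fun q => q.1 == names[j]) = some (names[j], vals[j]) := by
  induction names generalizing vals with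
  | nil => intro j hj; simp at hj
  | cons n ns ih =>
    intro j hj hv
    cases vals with
    | nil => simp at hv
    | cons v vs =>
      cases j with
      | zero => simp [List.find?]
      | succ j =>
        simp only [List.length_cons, Nat.succ_lt_succ_iff] at hj hv
        have hne : n ≠ ns[j] := by
          intro h; exact (List.nodup_cons.mp hnd).1 (h ▸ List.getElem_mem hj)
        simp only [List.zip_cons_cons, List.find?, List.getElem_cons_succ,
          beq_eq_false_iff_ne, ne_eq]
        rw [show (n == ns[j]) = false by simp [hne]]
        exact ih vs (List.nodup_cons.mp hnd).2 j hj hv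

lemma bindCtx_not_mem (ctx : ℕ → Option V) (names : List ℕ) (vals : List V) (p : ℕ)
    (h : p ∉ names) : bindCtx ctx names vals p = ctx p := by
  unfold bindCtx
  have : (names.zip vals).find? (fun q => q.1 == p) = none := by
    rw [List.find?_eq_none]
    intro q hq
    have := (List.of_mem_zip hq).1
    simp only [beq_iff_eq]
    exact fun hh => h (hh ▸ this)
  simp [this]

lemma bindCtx_getElem (ctx : ℕ → Option V) (names : List ℕ) (vals : List V)
    (hnd : names.Nodup) (j : ℕ) (hj : j < names.length) (hv : j < vals.length) :
    bindCtx ctx names vals names[j] = some vals[j] := by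
  unfold bindCtx
  rw [find?_zip_eq names vals hnd j hj hv]

lemma agreesB_iff [DecidableEq V] (ctx : ℕ → Option V) (names : List ℕ) (vals : List V) :
    agreesB ctx names vals = true ↔
      ∀ j (hj : j < names.length) (hv : j < vals.length) (b : V),
        ctx names[j] = some b → vals[j] = b := by
  unfold agreesB
  rw [List.all_eq_true]
  constructor
  · intro h j hj hv b hb
    have hmem : (names[j], vals[j]) ∈ names.zip vals := by
      have hlt : j < (names.zip vals).length := by
        rw [List.length_zip]; exact lt_min hj hv
      have := List.getElem_mem hlt
      rwa [List.getElem_zip] at this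
    have := h _ hmem
    simp only at this
    rw [hb] at this
    simpa using this
  · intro h q hq
    rcases List.mem_iff_getElem.mp hq with ⟨j, hjl, hjq⟩
    have hj : j < names.length := by rw [List.length_zip] at hjl; omega
    have hv : j < vals.length := by rw [List.length_zip] at hjl; omega
    rw [List.getElem_zip] at hjq
    cases hc : ctx q.1 with
    | none => simp [hc]
    | some b =>
      simp only [hc]
      have : q.1 = names[j] := by rw [← hjq]
      have hval : q.2 = vals[j] := by rw [← hjq]
      rw [hval, h j hj hv b (this ▸ hc)]
      simp

lemma fullCtx_getElem (Glist : List ℕ) (Gstar : List V) (hnd : Glist.Nodup)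
    (hlen : Gstar.length = Glist.length) (i : ℕ) (hi : i < Glist.length) :
    fullCtx Glist Gstar Glist[i] = some (Gstar[i]'(by omega)) := by
  unfold fullCtx
  exact bindCtx_getElem _ _ _ hnd i hi (by omega)

lemma fullCtx_not_mem (Glist : List ℕ) (Gstar : List V) (p : ℕ) (h : p ∉ Glist) :
    fullCtx Glist Gstar p = none := bindCtx_not_mem _ _ _ _ h

lemma map_fullCtx (Glist : List ℕ) (Gstar : List V) (hnd : Glist.Nodup)
    (hlen : Gstar.length = Glist.length) :
    Glist.map (fullCtx Glist Gstar) = Gstar.map some := by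
  apply List.ext_getElem (by simp [hlen])
  intro i h1 h2
  simp only [List.getElem_map]
  rw [fullCtx_getElem Glist Gstar hnd hlen i (by simpa using h1)]

lemma length_of_mem_spaceTuples [DecidableEq V] (sp : ℕ → Finset V) :
    ∀ (names : List ℕ) (t : List V), t ∈ spaceTuples sp names → t.length = names.length := by
  intro names
  induction names with
  | nil => intro t ht; simp [spaceTuples] at ht; simp [ht]
  | cons n ns ih =>
    intro t ht
    simp only [spaceTuples, Finset.mem_image, Finset.mem_product] at ht
    rcases ht with ⟨⟨a, b⟩, ⟨-, hb⟩, rfl⟩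
    simp [ih b hb]

end Helpers
section ZLemma
variable {V Var : Type}

lemma wf_nodup_append {Glist Gk Lk : List ℕ} (hG : ∀ g ∈ Gk, g ∈ Glist)
    (hL : ∀ l ∈ Lk, l ∉ Glist) (hGnd : Gk.Nodup) (hLnd : Lk.Nodup) :
    (Gk ++ Lk).Nodup :=
  hGnd.append hLnd (fun a ha hb => hL a hb (hG a ha))

/-- If the context binds a global placeholder to a value different from the `Gstar` value,
the row tagged `Gstar.map some` receives no contribution. -/
lemma evalTagged_zero [DecidableEq V] [DecidableEq Var]
    (Glist : List ℕ) (Gstar : List V) (hlen : Gstar.length = Glist.length)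
    (i : ℕ) (hi : i < Glist.length) (b : V) (hb : b ≠ Gstar[i]'(by omega)) :
    ∀ (e : GExpr V Var), e.wf Glist → ∀ ctx : ℕ → Option V, ctx Glist[i] = some b →
      ∀ w : Var, evalTagged Glist e ctx (Gstar.map some) w = 0 := by
  intro e
  induction e with
  | term c v =>
    intro _ ctx hctx w
    simp only [evalTagged]
    rw [if_neg]
    rintro ⟨htag, -⟩
    have := congrArg (fun l => l[i]?) htag
    simp only [List.getElem?_map] at this
    rw [List.getElem?_eq_getElem hi, List.getElem?_eq_getElem (by omega : i < Gstar.length)]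
      at this
    simp only [Option.map_some] at this
    rw [hctx] at this
    exact hb (by simpa using this.symm)
  | add l r ihl ihr =>
    intro hwf ctx hctx w
    simp only [evalTagged, ihl hwf.1 ctx hctx w, ihr hwf.2 ctx hctx w, add_zero]
  | sub l r ihl ihr =>
    intro hwf ctx hctx w
    simp only [evalTagged, ihl hwf.1 ctx hctx w, ihr hwf.2 ctx hctx w, sub_zero]
  | sum Gk Lk data body ih =>
    intro hwf ctx hctx w
    obtain ⟨hG, hL, hGnd, hLnd, hdlen, hbwf⟩ := hwf
    simp only [evalTagged]
    apply Finset.sum_eq_zero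
    intro tup htup
    rw [Finset.mem_filter] at htup
    obtain ⟨htdata, hagree⟩ := htup
    apply ih hbwf _ _ w
    by_cases hmem : Glist[i] ∈ Gk
    · -- bound again, but to the same wrong value b
      obtain ⟨j, hj, hjeq⟩ := List.mem_iff_getElem.mp hmem
      have htl : tup.length = Gk.length + Lk.length := hdlen tup htdata
      have hjt : j < tup.length := by omega
      have hval : tup[j] = b := by
        have := (agreesB_iff ctx Gk (tup.take Gk.length)).mp hagree j hj
          (by simp [htl]; omega) b (hjeq ▸ hctx)
        rwa [List.getElem_take] at this
      have hnd2 := wf_nodup_append hG hL hGnd hLnd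
      have : bindCtx ctx (Gk ++ Lk) tup ((Gk ++ Lk)[j]'(by simp; omega)) =
          some (tup[j]'(by omega)) :=
        bindCtx_getElem ctx (Gk ++ Lk) tup hnd2 j (by simp; omega) (by omega)
      rwa [List.getElem_append_left hj, hjeq, hval] at this
    · have hnl : Glist[i] ∉ Lk := fun h => hL _ h (List.getElem_mem hi)
      rw [bindCtx_not_mem _ _ _ _ (by simp [hmem, hnl])]
      exact hctx

end ZLemma
section NLemma
variable {V Var : Type}

lemma restrict_wf [DecidableEq V] (Glist : List ℕ) (gk : ℕ) (P : Finset V) :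
    ∀ e : GExpr V Var, e.wf Glist → (e.restrict gk P).wf Glist := by
  intro e
  induction e with
  | term c v => intro h; exact h
  | add l r ihl ihr => intro h; exact ⟨ihl h.1, ihr h.2⟩
  | sub l r ihl ihr => intro h; exact ⟨ihl h.1, ihr h.2⟩
  | sum Gk Lk data body ih =>
    intro h
    obtain ⟨hG, hL, hGnd, hLnd, hdlen, hbwf⟩ := h
    unfold GExpr.restrict
    split
    · exact ⟨hG, hL, hGnd, hLnd,
        fun tup htup => hdlen tup (Finset.mem_of_mem_filter tup htup), ih hbwf⟩
    · exact ⟨hG, hL, hGnd, hLnd, hdlen, ih hbwf⟩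

/-- If `gk` is not yet bound (and not yet accumulated) and the `Gstar` value at its
position lies outside `P`, Algorithm 2 on the restricted data yields the zero row. -/
lemma evalTagged_restrict_zero [DecidableEq V] [DecidableEq Var]
    (Glist : List ℕ) (Gstar : List V) (hlen : Gstar.length = Glist.length)
    (k : ℕ) (hk : k < Glist.length) (P : Finset V) (haP : Gstar[k]'(by omega) ∉ P) :
    ∀ (e : GExpr V Var), e.wf Glist → ∀ acc : List ℕ, e.covers Glist acc →
      Glist[k] ∉ acc → ∀ ctx : ℕ → Option V, ctx Glist[k] = none →
      ∀ w : Var, evalTagged Glist (e.restrict Glist[k] P) ctx (Gstar.map some) w = 0 := by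
  intro e
  induction e with
  | term c v =>
    intro _ acc hcov hacc ctx _ w
    exact absurd (hcov Glist[k] (List.getElem_mem hk)) hacc
  | add l r ihl ihr =>
    intro hwf acc hcov hacc ctx hctx w
    simp only [GExpr.restrict, evalTagged,
      ihl hwf.1 acc hcov.1 hacc ctx hctx w, ihr hwf.2 acc hcov.2 hacc ctx hctx w, add_zero]
  | sub l r ihl ihr =>
    intro hwf acc hcov hacc ctx hctx w
    simp only [GExpr.restrict, evalTagged,
      ihl hwf.1 acc hcov.1 hacc ctx hctx w, ihr hwf.2 acc hcov.2 hacc ctx hctx w, sub_zero]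
  | sum Gk Lk data body ih =>
    intro hwf acc hcov hacc ctx hctx w
    obtain ⟨hG, hL, hGnd, hLnd, hdlen, hbwf⟩ := hwf
    have hnl : Glist[k] ∉ Lk := fun h => hL _ h (List.getElem_mem hk)
    by_cases hmem : Glist[k] ∈ Gk
    · -- the sum binds gk; restricted data forces the binding into P, hence ≠ Gstar[k]
      rw [GExpr.restrict, if_pos (by simp [hmem])]
      simp only [evalTagged]
      apply Finset.sum_eq_zero
      intro tup htup
      rw [Finset.mem_filter] at htup
      obtain ⟨htup, -⟩ := htup
      rw [Finset.mem_filter] at htup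
      obtain ⟨htdata, hrestr⟩ := htup
      -- find gk's index in Gk
      have hidx : (Gk ++ Lk).idxOf Glist[k] = Gk.idxOf Glist[k] :=
        List.idxOf_append_of_mem hmem
      set j := Gk.idxOf Glist[k] with hjdef
      have hj : j < Gk.length := List.idxOf_lt_length_iff.mpr hmem
      have hjeq : Gk[j] = Glist[k] := List.getElem_idxOf hj
      have htl : tup.length = Gk.length + Lk.length := hdlen tup htdata
      have hjt : j < tup.length := by omega
      rw [hidx, List.getElem?_eq_getElem hjt] at hrestr
      simp only [Option.any_some, decide_eq_true_eq] at hrestr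
      have hne : tup[j] ≠ Gstar[k]'(by omega) := fun h => haP (h ▸ hrestr)
      have hnd2 := wf_nodup_append hG hL hGnd hLnd
      have hbind : bindCtx ctx (Gk ++ Lk) tup ((Gk ++ Lk)[j]'(by simp; omega)) =
          some (tup[j]'hjt) :=
        bindCtx_getElem ctx (Gk ++ Lk) tup hnd2 j (by simp; omega) hjt
      rw [List.getElem_append_left hj, hjeq] at hbind
      exact evalTagged_zero Glist Gstar hlen k hk tup[j] hne _
        (restrict_wf Glist Glist[k] P body hbwf) _ hbind w
    · rw [GExpr.restrict, if_neg (by simp [hmem, hnl])]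
      simp only [evalTagged]
      apply Finset.sum_eq_zero
      intro tup htup
      apply ih hbwf (acc ++ Gk) hcov (by simp [hacc, hmem])
      · rw [bindCtx_not_mem _ _ _ _ (by simp [hmem, hnl])]; exact hctx

end NLemma
section MLemma
variable {V Var : Type}

lemma bindCtx_congr (ctx1 ctx2 : ℕ → Option V) (n : List ℕ) (v : List V) (p : ℕ)
    (h : ctx2 p = ctx1 p) : bindCtx ctx2 n v p = bindCtx ctx1 n v p := by
  unfold bindCtx
  cases h' : (n.zip v).find? (fun q => q.1 == p) <;> simp [h]

lemma bindCtx_sub (ctx1 ctx2 : ℕ → Option V) (n : List ℕ) (v : List V) (p : ℕ)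
    (h : ctx2 p = none ∨ ctx2 p = ctx1 p) :
    bindCtx ctx2 n v p = none ∨ bindCtx ctx2 n v p = bindCtx ctx1 n v p := by
  unfold bindCtx
  cases h' : (n.zip v).find? (fun q => q.1 == p) with
  | some q => right; rfl
  | none => simpa using h

/-- Main induction: with matching contexts, Algorithm 2 on the restricted data computes,
in the row tagged `Gstar.map some` with `Gstar`'s `k`-th component in `P`, exactly the
row computed by Algorithm 1. -/
lemma evalTagged_restrict_eq [DecidableEq V] [DecidableEq Var]
    (Glist : List ℕ) (hnd : Glist.Nodup) (Gstar : List V)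
    (hlen : Gstar.length = Glist.length)
    (k : ℕ) (hk : k < Glist.length) (P : Finset V) (haP : Gstar[k]'(by omega) ∈ P) :
    ∀ (e : GExpr V Var), e.wf Glist → ∀ acc : List ℕ, e.covers Glist acc →
      ∀ ctx1 ctx2 : ℕ → Option V,
      (∀ p ∈ Glist, ctx1 p = fullCtx Glist Gstar p) →
      (∀ p, p ∉ Glist → ctx2 p = ctx1 p) →
      (∀ p ∈ Glist, ctx2 p = none ∨ ctx2 p = ctx1 p) →
      (∀ p ∈ Glist, p ∈ acc → ctx2 p = ctx1 p) →
      ∀ w : Var, evalTagged Glist (e.restrict Glist[k] P) ctx2 (Gstar.map some) w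
        = evalFull e ctx1 w := by
  intro e
  induction e with
  | term c v =>
    intro _ acc hcov ctx1 ctx2 H1 H2 H3 H4 w
    have hctx : ctx2 = ctx1 := by
      funext p
      by_cases hp : p ∈ Glist
      · exact H4 p hp (hcov p hp)
      · exact H2 p hp
    have htag : Glist.map ctx1 = Gstar.map some := by
      rw [List.map_congr_left H1]
      exact map_fullCtx Glist Gstar hnd hlen
    simp only [GExpr.restrict, evalTagged, evalFull, hctx, htag, true_and]
  | add l r ihl ihr =>
    intro hwf acc hcov ctx1 ctx2 H1 H2 H3 H4 w
    simp only [GExpr.restrict, evalTagged, evalFull,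
      ihl hwf.1 acc hcov.1 ctx1 ctx2 H1 H2 H3 H4 w,
      ihr hwf.2 acc hcov.2 ctx1 ctx2 H1 H2 H3 H4 w]
  | sub l r ihl ihr =>
    intro hwf acc hcov ctx1 ctx2 H1 H2 H3 H4 w
    simp only [GExpr.restrict, evalTagged, evalFull,
      ihl hwf.1 acc hcov.1 ctx1 ctx2 H1 H2 H3 H4 w,
      ihr hwf.2 acc hcov.2 ctx1 ctx2 H1 H2 H3 H4 w]
  | sum Gk Lk data body ih =>
    intro hwf acc hcov ctx1 ctx2 H1 H2 H3 H4 w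
    obtain ⟨hG, hL, hGnd, hLnd, hdlen, hbwf⟩ := hwf
    have hnd2 := wf_nodup_append hG hL hGnd hLnd
    have hnl : Glist[k] ∉ Lk := fun h => hL _ h (List.getElem_mem hk)
    -- the common core, for any subset `d'` of the data containing all ctx1-agreeing tuples
    have main : ∀ d' : Finset (List V), d' ⊆ data →
        (∀ tup ∈ data, agreesB ctx1 Gk (tup.take Gk.length) = true → tup ∈ d') →
        ∑ tup ∈ d'.filter (fun tup => agreesB ctx2 Gk (tup.take Gk.length) = true),
          evalTagged Glist (body.restrict Glist[k] P) (bindCtx ctx2 (Gk ++ Lk) tup)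
            (Gstar.map some) w
          = ∑ tup ∈ data.filter (fun tup => agreesB ctx1 Gk (tup.take Gk.length) = true),
              evalFull body (bindCtx ctx1 (Gk ++ Lk) tup) w := by
      intro d' hd'sub hd'full
      have hsub : data.filter (fun tup => agreesB ctx1 Gk (tup.take Gk.length) = true) ⊆
          d'.filter (fun tup => agreesB ctx2 Gk (tup.take Gk.length) = true) := by
        intro tup htup
        rw [Finset.mem_filter] at htup ⊢
        obtain ⟨htdata, hag1⟩ := htup
        refine ⟨hd'full tup htdata hag1, ?_⟩
        rw [agreesB_iff] at hag1 ⊢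
        intro j hj hv b hb
        rcases H3 Gk[j] (hG _ (List.getElem_mem hj)) with h0 | h0
        · rw [h0] at hb; exact absurd hb (by simp)
        · exact hag1 j hj hv b (by rw [← h0]; exact hb)
      rw [← Finset.sum_subset hsub ?_]
      · -- equal terms on the common index set
        apply Finset.sum_congr rfl
        intro tup htup
        rw [Finset.mem_filter] at htup
        obtain ⟨htdata, hag1⟩ := htup
        have htl : tup.length = Gk.length + Lk.length := hdlen tup htdata
        apply ih hbwf (acc ++ Gk) hcov
        · -- H1'
          intro p hp
          by_cases hpG : p ∈ Gk
          · have hj : Gk.idxOf p < Gk.length := List.idxOf_lt_length_iff.mpr hpG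
            set j := Gk.idxOf p with hjdef
            have hjeq : Gk[j] = p := List.getElem_idxOf hj
            have hb : bindCtx ctx1 (Gk ++ Lk) tup ((Gk ++ Lk)[j]'(by simp; omega)) =
                some (tup[j]'(by omega)) :=
              bindCtx_getElem ctx1 (Gk ++ Lk) tup hnd2 j (by simp; omega) (by omega)
            rw [List.getElem_append_left hj, hjeq] at hb
            rw [hb]
            have hc1 : ctx1 p = fullCtx Glist Gstar p := H1 p hp
            obtain ⟨i, hi, hieq⟩ := List.mem_iff_getElem.mp hp
            have hfc : fullCtx Glist Gstar p = some (Gstar[i]'(by omega)) := by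
              have := fullCtx_getElem Glist Gstar hnd hlen i hi; rwa [hieq] at this
            have := (agreesB_iff ctx1 Gk (tup.take Gk.length)).mp hag1 j hj
              (by simp [htl]; omega) (Gstar[i]'(by omega)) (by rw [hjeq, hc1, hfc])
            rw [List.getElem_take] at this
            rw [this, hfc]
          · have hpL : p ∉ Lk := by
              by_cases hpGl : p ∈ Glist
              · exact fun h => hL p h hpGl
              · exact fun h => (hL p h hp).elim
            rw [bindCtx_not_mem _ _ _ _ (by simp [hpG, hpL])]
            exact H1 p hp
        · -- H2'
          intro p hp
          exact bindCtx_congr ctx1 ctx2 _ _ p (H2 p hp)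
        · -- H3'
          intro p hp
          exact bindCtx_sub ctx1 ctx2 _ _ p (H3 p hp)
        · -- H4'
          intro p hp hpacc
          by_cases hpG : p ∈ Gk
          · have hj : Gk.idxOf p < Gk.length := List.idxOf_lt_length_iff.mpr hpG
            set j := Gk.idxOf p with hjdef
            have hjeq : Gk[j] = p := List.getElem_idxOf hj
            have hb2 : bindCtx ctx2 (Gk ++ Lk) tup ((Gk ++ Lk)[j]'(by simp; omega)) =
                some (tup[j]'(by omega)) :=
              bindCtx_getElem ctx2 (Gk ++ Lk) tup hnd2 j (by simp; omega) (by omega)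
            have hb1 : bindCtx ctx1 (Gk ++ Lk) tup ((Gk ++ Lk)[j]'(by simp; omega)) =
                some (tup[j]'(by omega)) :=
              bindCtx_getElem ctx1 (Gk ++ Lk) tup hnd2 j (by simp; omega) (by omega)
            rw [List.getElem_append_left hj, hjeq] at hb1 hb2
            rw [hb1, hb2]
          · have hpA : p ∈ acc := by
              rcases List.mem_append.mp hpacc with h | h
              · exact h
              · exact absurd h hpG
            exact bindCtx_congr ctx1 ctx2 _ _ p (H4 p hp hpA)
      · -- tuples agreeing with ctx2 but not ctx1 contribute zero
        intro tup htup hnotin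
        rw [Finset.mem_filter] at htup
        obtain ⟨htd', hag2⟩ := htup
        have htdata : tup ∈ data := hd'sub htd'
        have htl : tup.length = Gk.length + Lk.length := hdlen tup htdata
        have hnag1 : ¬ agreesB ctx1 Gk (tup.take Gk.length) = true := by
          intro h
          exact hnotin (Finset.mem_filter.mpr ⟨htdata, h⟩)
        rw [agreesB_iff] at hnag1
        push_neg at hnag1
        obtain ⟨j, hj, hv, b, hb, hne⟩ := hnag1
        have hpGl : Gk[j] ∈ Glist := hG _ (List.getElem_mem hj)
        obtain ⟨i, hi, hieq⟩ := List.mem_iff_getElem.mp hpGl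
        have hfc : ctx1 Gk[j] = some (Gstar[i]'(by omega)) := by
          rw [H1 _ hpGl, ← hieq]
          exact fullCtx_getElem Glist Gstar hnd hlen i hi
        have hbval : b = Gstar[i]'(by omega) := by
          rw [hb] at hfc; exact Option.some_injective _ hfc
        have hjt : j < tup.length := by omega
        have hbind : bindCtx ctx2 (Gk ++ Lk) tup ((Gk ++ Lk)[j]'(by simp; omega)) =
            some (tup[j]'hjt) :=
          bindCtx_getElem ctx2 (Gk ++ Lk) tup hnd2 j (by simp; omega) hjt
        rw [List.getElem_append_left hj] at hbind
        have hneq : tup[j]'hjt ≠ Gstar[i]'(by omega) := by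
          intro h
          apply hne
          rw [List.getElem_take, h, hbval]
        exact evalTagged_zero Glist Gstar hlen i hi _ hneq _
          (restrict_wf Glist Glist[k] P body hbwf) _ (hieq ▸ hbind) w
    -- now split on whether this sum's data is restricted
    by_cases hmem : Glist[k] ∈ Gk
    · rw [GExpr.restrict, if_pos (by simp [hmem])]
      simp only [evalTagged, evalFull]
      apply main _ (Finset.filter_subset _ _)
      intro tup htdata hag1
      rw [Finset.mem_filter]
      refine ⟨htdata, ?_⟩
      have hidx : (Gk ++ Lk).idxOf Glist[k] = Gk.idxOf Glist[k] :=
        List.idxOf_append_of_mem hmem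
      have hj : Gk.idxOf Glist[k] < Gk.length := List.idxOf_lt_length_iff.mpr hmem
      set j := Gk.idxOf Glist[k] with hjdef
      have hjeq : Gk[j] = Glist[k] := List.getElem_idxOf hj
      have htl : tup.length = Gk.length + Lk.length := hdlen tup htdata
      have hjt : j < tup.length := by omega
      have hfc : ctx1 Glist[k] = some (Gstar[k]'(by omega)) := by
        rw [H1 _ (List.getElem_mem hk)]
        exact fullCtx_getElem Glist Gstar hnd hlen k hk
      have hval := (agreesB_iff ctx1 Gk (tup.take Gk.length)).mp hag1 j hj
        (by simp [htl]; omega) (Gstar[k]'(by omega)) (by rw [hjeq]; exact hfc)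
      rw [List.getElem_take] at hval
      rw [hidx, List.getElem?_eq_getElem hjt]
      simp only [Option.any_some, decide_eq_true_eq]
      rw [hval]; exact haP
    · rw [GExpr.restrict, if_neg (by simp [hmem, hnl])]
      simp only [evalTagged, evalFull]
      exact main data (subset_refl _) (fun tup ht _ => ht)

end MLemma
/-- **Proposition 2 (index-partition equals data-partition).**  Let `e` be a symbolic
multidimensional expression with global placeholder tuple `Glist` satisfying the
assumptions of Lemmas 1 and 2 (`e.allUnderSum`, `e.covers Glist []`, well-formedness
`e.wf Glist`).  Fix a position `k` of the global tuple (placeholder `g_k = Glist.get k`)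
and a subset `P ⊆ space(g_k)`.  Then running the exhaustive instantiation algorithm
(Algorithm 1) only over the restricted set of global index tuples
`{G* ∈ space(G) : G*_k ∈ P}` produces exactly the same set of instantiated constraint rows
as running the context-passing instantiation algorithm (Algorithm 2) on the restricted set
data (`e.restrict (Glist.get k) P`) in which every set data whose index tuples contain the
placeholder `g_k` is replaced by its subset of tuples whose `g_k`-component lies in `P`:
for every `G* ∈ space(G)` whose `k`-th component `a` lies in `P`, the row tagged `G*`
produced by Algorithm 2 on the restricted data equals the row produced by Algorithm 1 for
`G*`; and for every `G* ∈ space(G)` whose `k`-th component lies outside `P`, Algorithm 2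
on the restricted data produces no row tagged `G*` (the zero row). -/
theorem index_partition_eq_data_partition [DecidableEq V] [DecidableEq Var]
    (sp : ℕ → Finset V) (Glist : List ℕ) (hnd : Glist.Nodup)
    (e : GExpr V Var) (hwf : e.wf Glist) (hsum : e.allUnderSum)
    (hcov : e.covers Glist [])
    (k : Fin Glist.length) (P : Finset V) (hP : P ⊆ sp (Glist.get k)) :
    ∀ Gstar ∈ spaceTuples sp Glist, ∀ a : V, Gstar[(k : ℕ)]? = some a →
      (a ∈ P → ∀ w : Var,
          evalTagged Glist (e.restrict (Glist.get k) P) (fun _ => none) (Gstar.map some) w =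
          evalFull e (fullCtx Glist Gstar) w) ∧
      (a ∉ P → ∀ w : Var,
          evalTagged Glist (e.restrict (Glist.get k) P) (fun _ => none) (Gstar.map some) w
            = 0) := by
  intro Gstar hGstar a ha
  have hlen : Gstar.length = Glist.length :=
    length_of_mem_spaceTuples sp Glist Gstar hGstar
  have hk : (k : ℕ) < Glist.length := k.isLt
  obtain ⟨hka, hval⟩ := List.getElem?_eq_some_iff.mp ha
  constructor
  · intro haP w
    rw [show Glist.get k = Glist[(k : ℕ)] from rfl]
    apply evalTagged_restrict_eq Glist hnd Gstar hlen (k : ℕ) hk P (hval ▸ haP)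
      e hwf [] hcov
    · intro p _; rfl
    · intro p hp
      exact (fullCtx_not_mem Glist Gstar p hp).symm
    · intro p _; left; rfl
    · intro p _ hpacc; exact absurd hpacc List.not_mem_nil
  · intro haP w
    rw [show Glist.get k = Glist[(k : ℕ)] from rfl]
    exact evalTagged_restrict_zero Glist Gstar hlen (k : ℕ) hk P (hval ▸ haP)
      e hwf [] hcov List.not_mem_nil _ rfl w
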